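/- Let α, β, ρ, x0, ū be positive real numbers satisfying (β − ρ·x0)·ū − α·x0 > 0, let t_sw : (0, ∞) → ℝ be the function assigning to each terminal time t_f > 0 the unique switching time t_sw(t_f) ∈ (0, t_f) with F(t_sw(t_f)) = x0, and define the idle energy function E(t_f) = ū·(t_f − t_sw(t_f)). Then E is concave on (0, ∞), i.e. E(λa + (1−λ)b) ≥ λ·E(a) + (1−λ)·E(b) for all a, b > 0 and λ ∈ [0,1]. -/
import Mathlib


/-- `F τ` is the terminal value `x(t_f)` of the bilinear furnace model started at
`x(0) = x0`, with input `u ≡ 0` on `[0, τ)` and `u ≡ ū` on `[τ, t_f]`. -/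
noncomputable def F (α β ρ x0 ubar tf τ : ℝ) : ℝ :=
  Real.exp ((-α - ρ * ubar) * (tf - τ)) *
      (x0 * Real.exp (-α * τ) - β * ubar / (α + ρ * ubar)) +
    β * ubar / (α + ρ * ubar)

set_option maxHeartbeats 1600000

/-- Under assumption (A), the idle energy function
`E(t_f) = ū·(t_f − t_sw(t_f))` is concave on `(0, ∞)`:
`E(λa + (1−λ)b) ≥ λ·E(a) + (1−λ)·E(b)` for all `a, b > 0` and `λ ∈ [0, 1]`. -/
theorem stmt_15 (α β ρ x0 ubar : ℝ)
    (hα : 0 < α) (hβ : 0 < β) (hρ : 0 < ρ) (hx0 : 0 < x0) (hu : 0 < ubar)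
    (hA : (β - ρ * x0) * ubar - α * x0 > 0)
    (tsw : ℝ → ℝ)
    (htsw : ∀ tf : ℝ, 0 < tf →
      tsw tf ∈ Set.Ioo 0 tf ∧ F α β ρ x0 ubar tf (tsw tf) = x0)
    (E : ℝ → ℝ) (hE : ∀ tf, E tf = ubar * (tf - tsw tf)) :
    ∀ a b l : ℝ, 0 < a → 0 < b → l ∈ Set.Icc (0:ℝ) 1 →
      l * E a + (1 - l) * E b ≤ E (l * a + (1 - l) * b) := by
  intro a b l ha hb hl
  obtain ⟨hl0, hl1⟩ := hl
  have hl1' : (0:ℝ) ≤ 1 - l := by linarith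
  have hk : 0 < α + ρ * ubar := by positivity
  have hcx : x0 < β * ubar / (α + ρ * ubar) := by
    rw [lt_div_iff₀ hk]; nlinarith
  -- positivity of c - x0 * exp(-α τ) for τ ≥ 0
  have hpos : ∀ τ : ℝ, 0 ≤ τ → 0 < β * ubar / (α + ρ * ubar) - x0 * Real.exp (-α * τ) := by
    intro τ hτ
    have h1 : Real.exp (-α * τ) ≤ 1 := Real.exp_le_one_iff.mpr (by nlinarith)
    nlinarith [Real.exp_pos (-α * τ)]
  -- the key implicit equation for the switching time
  have key : ∀ tf : ℝ, 0 < tf →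
      (α + ρ * ubar) * (tf - tsw tf) =
        Real.log (β * ubar / (α + ρ * ubar) - x0 * Real.exp (-α * tsw tf)) -
          Real.log (β * ubar / (α + ρ * ubar) - x0) := by
    intro tf htf
    obtain ⟨⟨hτ0, hτtf⟩, hFeq⟩ := htsw tf htf
    have hFeq2 : Real.exp ((-α - ρ * ubar) * (tf - tsw tf)) *
        (x0 * Real.exp (-α * tsw tf) - β * ubar / (α + ρ * ubar)) +
          β * ubar / (α + ρ * ubar) = x0 := hFeq
    rw [show (-α - ρ * ubar) * (tf - tsw tf) = -((α + ρ * ubar) * (tf - tsw tf)) by ring]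
      at hFeq2
    have hFeq3 : Real.exp (-((α + ρ * ubar) * (tf - tsw tf))) *
        (β * ubar / (α + ρ * ubar) - x0 * Real.exp (-α * tsw tf)) =
          β * ubar / (α + ρ * ubar) - x0 := by
      linear_combination -hFeq2
    have hlog := congrArg Real.log hFeq3
    rw [Real.log_mul (Real.exp_ne_zero _) (ne_of_gt (hpos _ hτ0.le)), Real.log_exp] at hlog
    linarith
  have hm : 0 < l * a + (1 - l) * b := by
    rcases le_total a b with h | h
    · nlinarith
    · nlinarith
  obtain ⟨⟨hτa0, hτaa⟩, -⟩ := htsw a ha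
  obtain ⟨⟨hτb0, hτbb⟩, -⟩ := htsw b hb
  obtain ⟨⟨hτm0, hτmm⟩, -⟩ := htsw _ hm
  have hka := key a ha
  have hkb := key b hb
  have hkm := key _ hm
  have hτs0 : 0 ≤ l * tsw a + (1 - l) * tsw b :=
    add_nonneg (mul_nonneg hl0 hτa0.le) (mul_nonneg hl1' hτb0.le)
  -- convexity of exp
  have hexp : Real.exp (-α * (l * tsw a + (1 - l) * tsw b)) ≤
      l * Real.exp (-α * tsw a) + (1 - l) * Real.exp (-α * tsw b) := by
    have h := convexOn_exp.2 (Set.mem_univ (-α * tsw a)) (Set.mem_univ (-α * tsw b))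
      hl0 hl1' (by ring)
    simp only [smul_eq_mul] at h
    calc Real.exp (-α * (l * tsw a + (1 - l) * tsw b))
        = Real.exp (l * (-α * tsw a) + (1 - l) * (-α * tsw b)) := by ring_nf
      _ ≤ l * Real.exp (-α * tsw a) + (1 - l) * Real.exp (-α * tsw b) := h
  have hya := hpos _ hτa0.le
  have hyb := hpos _ hτb0.le
  -- concavity of log
  have hcomb : 0 < l * (β * ubar / (α + ρ * ubar) - x0 * Real.exp (-α * tsw a)) +
      (1 - l) * (β * ubar / (α + ρ * ubar) - x0 * Real.exp (-α * tsw b)) := by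
    rcases le_total (β * ubar / (α + ρ * ubar) - x0 * Real.exp (-α * tsw a))
      (β * ubar / (α + ρ * ubar) - x0 * Real.exp (-α * tsw b)) with h | h
    · nlinarith
    · nlinarith
  have hlog : l * Real.log (β * ubar / (α + ρ * ubar) - x0 * Real.exp (-α * tsw a)) +
      (1 - l) * Real.log (β * ubar / (α + ρ * ubar) - x0 * Real.exp (-α * tsw b)) ≤
      Real.log (l * (β * ubar / (α + ρ * ubar) - x0 * Real.exp (-α * tsw a)) +
        (1 - l) * (β * ubar / (α + ρ * ubar) - x0 * Real.exp (-α * tsw b))) := by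
    have h := strictConcaveOn_log_Ioi.concaveOn.2 (Set.mem_Ioi.2 hya) (Set.mem_Ioi.2 hyb)
      hl0 hl1' (by ring)
    simpa using h
  have hmono1 : l * (β * ubar / (α + ρ * ubar) - x0 * Real.exp (-α * tsw a)) +
      (1 - l) * (β * ubar / (α + ρ * ubar) - x0 * Real.exp (-α * tsw b)) ≤
      β * ubar / (α + ρ * ubar) - x0 * Real.exp (-α * (l * tsw a + (1 - l) * tsw b)) := by
    have h' := mul_le_mul_of_nonneg_left hexp hx0.le
    linarith
  have hG : l * Real.log (β * ubar / (α + ρ * ubar) - x0 * Real.exp (-α * tsw a)) +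
      (1 - l) * Real.log (β * ubar / (α + ρ * ubar) - x0 * Real.exp (-α * tsw b)) ≤
      Real.log (β * ubar / (α + ρ * ubar) -
        x0 * Real.exp (-α * (l * tsw a + (1 - l) * tsw b))) :=
    hlog.trans (Real.log_le_log hcomb hmono1)
  -- show tsw m ≤ l * tsw a + (1-l) * tsw b
  have hτms : tsw (l * a + (1 - l) * b) ≤ l * tsw a + (1 - l) * tsw b := by
    by_contra hcon
    push_neg at hcon
    have hGmono : Real.log (β * ubar / (α + ρ * ubar) -
        x0 * Real.exp (-α * (l * tsw a + (1 - l) * tsw b))) ≤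
        Real.log (β * ubar / (α + ρ * ubar) -
          x0 * Real.exp (-α * tsw (l * a + (1 - l) * b))) := by
      apply Real.log_le_log (hpos _ hτs0)
      have h2 : Real.exp (-α * tsw (l * a + (1 - l) * b)) ≤
          Real.exp (-α * (l * tsw a + (1 - l) * tsw b)) :=
        Real.exp_le_exp.mpr
          (by have := mul_le_mul_of_nonneg_left hcon.le hα.le; linarith)
      have h3 := mul_le_mul_of_nonneg_left h2 hx0.le
      linarith
    have h1 : (α + ρ * ubar) * ((l * a + (1 - l) * b) - (l * tsw a + (1 - l) * tsw b)) =
        l * Real.log (β * ubar / (α + ρ * ubar) - x0 * Real.exp (-α * tsw a)) +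
        (1 - l) * Real.log (β * ubar / (α + ρ * ubar) - x0 * Real.exp (-α * tsw b)) -
        Real.log (β * ubar / (α + ρ * ubar) - x0) := by
      linear_combination l * hka + (1 - l) * hkb
    have h2 : (α + ρ * ubar) * (tsw (l * a + (1 - l) * b) - (l * tsw a + (1 - l) * tsw b))
        ≤ 0 := by linarith
    have h3 := mul_pos hk (sub_pos.2 hcon)
    nlinarith
  rw [hE a, hE b, hE (l * a + (1 - l) * b)]
  have hfin : ubar * ((l * a + (1 - l) * b) - (l * tsw a + (1 - l) * tsw b)) ≤
      ubar * ((l * a + (1 - l) * b) - tsw (l * a + (1 - l) * b)) :=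
    mul_le_mul_of_nonneg_left (by linarith) hu.le
  linarith [hfin]
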